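/- In any zero-error SPIR scheme, for every message index k ∈ {1,…,K} and every database index n ∈ {1,…,N}, L ≤ H(A_1^{[k]}, …, A_N^{[k]} | F) − H(A_n^{[k]} | F); that is, the joint conditional entropy of the answers given the user randomness exceeds the conditional entropy of any single answer by at least the message length in bits. -/

import Mathlib

open Finset

attribute [local instance] Classical.propDecidable

/-- Probability that the random variable `X` takes the value `a`, on a finite
sample space `Ω` with probability mass function `p`. -/
noncomputable def prob {Ω α : Type*} [Fintype Ω] (p : Ω → ℝ) (X : Ω → α) (a : α) : ℝ :=
  ∑ ω : Ω, if X ω = a then p ω else 0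

/-- Shannon entropy (in bits) of the random variable `X`. -/
noncomputable def ent {Ω α : Type*} [Fintype Ω] [Fintype α] (p : Ω → ℝ) (X : Ω → α) : ℝ :=
  - ∑ a : α, prob p X a * Real.logb 2 (prob p X a)

/-- Conditional Shannon entropy (in bits) `H(X | Y)`. -/
noncomputable def condEnt {Ω α β : Type*} [Fintype Ω] [Fintype α] [Fintype β]
    (p : Ω → ℝ) (X : Ω → α) (Y : Ω → β) : ℝ :=
  ent p (fun ω => (X ω, Y ω)) - ent p Y

/-- Shannon mutual information (in bits) `I(X ; Y)`. -/
noncomputable def mutInfo {Ω α β : Type*} [Fintype Ω] [Fintype α] [Fintype β]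
    (p : Ω → ℝ) (X : Ω → α) (Y : Ω → β) : ℝ :=
  ent p X + ent p Y - ent p (fun ω => (X ω, Y ω))

/-- `X` and `Y` are identically distributed. -/
def IdentDist {Ω α : Type*} [Fintype Ω] (p : Ω → ℝ) (X Y : Ω → α) : Prop :=
  ∀ a : α, prob p X a = prob p Y a

/-- `X` is uniformly distributed on `α`. -/
def Unif {Ω α : Type*} [Fintype Ω] [Fintype α] (p : Ω → ℝ) (X : Ω → α) : Prop :=
  ∀ a : α, prob p X a = 1 / (Fintype.card α : ℝ)

namespace SPIRaux
variable {Ω : Type*} [Fintype Ω] {p : Ω → ℝ}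

lemma prob_nonneg (hp0 : ∀ ω, 0 ≤ p ω) {α : Type*} (X : Ω → α) (a : α) :
    0 ≤ prob p X a :=
  Finset.sum_nonneg fun ω _ => by by_cases h : X ω = a <;> simp [h, hp0 ω]

lemma prob_comp {α β : Type*} [Fintype α] (f : α → β) (X : Ω → α) (b : β) :
    prob p (fun ω => f (X ω)) b = ∑ a : α, if f a = b then prob p X a else 0 := by
  have h : ∀ a : α, (if f a = b then prob p X a else 0)
      = ∑ ω : Ω, if X ω = a ∧ f a = b then p ω else 0 := by
    intro a
    by_cases h : f a = b
    · simp only [h, if_true, and_true, prob]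
    · simp [h]
  simp only [h]
  rw [Finset.sum_comm]
  refine Finset.sum_congr rfl fun ω _ => ?_
  rw [Finset.sum_eq_single (X ω)]
  · simp [prob]
  · intro a _ ha
    rw [if_neg]; rintro ⟨h1, -⟩; exact ha h1.symm
  · simp

lemma prob_sum (hp1 : ∑ ω : Ω, p ω = 1) {α : Type*} [Fintype α] (X : Ω → α) :
    ∑ a : α, prob p X a = 1 := by
  unfold prob
  rw [Finset.sum_comm]
  simp only [Finset.sum_ite_eq, Finset.mem_univ, if_true]
  exact hp1

lemma prob_fst {α β : Type*} [Fintype β] (X : Ω → α) (Y : Ω → β) (a : α) :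
    prob p X a = ∑ b : β, prob p (fun ω => (X ω, Y ω)) (a, b) := by
  unfold prob
  rw [Finset.sum_comm]
  refine Finset.sum_congr rfl fun ω _ => ?_
  by_cases h : X ω = a <;> simp [h, Prod.mk.injEq, ite_and, Finset.sum_ite_eq]

lemma prob_snd {α β : Type*} [Fintype α] (X : Ω → α) (Y : Ω → β) (b : β) :
    prob p Y b = ∑ a : α, prob p (fun ω => (X ω, Y ω)) (a, b) := by
  unfold prob
  rw [Finset.sum_comm]
  refine Finset.sum_congr rfl fun ω _ => ?_
  simp only [Prod.mk.injEq, ite_and, Finset.sum_ite_eq, Finset.mem_univ, if_true]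


lemma ent_congr {α : Type*} [Fintype α] {X Y : Ω → α}
    (h : ∀ a, prob p X a = prob p Y a) : ent p X = ent p Y := by
  unfold ent
  congr 1
  exact Finset.sum_congr rfl fun a _ => by rw [h a]

lemma sum_push_eq {α β : Type*} [Fintype α] [Fintype β] (d : α → ℝ) {e : α → β}
    (he : Function.Injective e) (φ : ℝ → ℝ) (hφ0 : φ 0 = 0) :
    ∑ b : β, φ (∑ a : α, if e a = b then d a else 0) = ∑ a : α, φ (d a) := by
  classical
  rw [← Finset.sum_subset (Finset.subset_univ (Finset.univ.image e))]
  · rw [Finset.sum_image (fun a _ a' _ h => he h)]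
    refine Finset.sum_congr rfl fun a _ => ?_
    congr 1
    rw [Finset.sum_eq_single a]
    · simp
    · intro a' _ ha'; rw [if_neg fun h => ha' (he h)]
    · simp
  · intro b _ hb
    have h0 : ∑ a : α, (if e a = b then d a else 0) = 0 := by
      refine Finset.sum_eq_zero fun a _ => ?_
      rw [if_neg fun h => hb (Finset.mem_image.mpr ⟨a, Finset.mem_univ a, h⟩)]
    rw [h0, hφ0]

lemma ent_comp_inj {α β : Type*} [Fintype α] [Fintype β] (X : Ω → α) {e : α → β}
    (he : Function.Injective e) :
    ent p (fun ω => e (X ω)) = ent p X := by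
  unfold ent
  congr 1
  calc ∑ b : β, prob p (fun ω => e (X ω)) b * Real.logb 2 (prob p (fun ω => e (X ω)) b)
      = ∑ b : β, (fun x => x * Real.logb 2 x) (∑ a : α, if e a = b then prob p X a else 0) := by
        refine Finset.sum_congr rfl fun b _ => ?_
        rw [prob_comp]
    _ = ∑ a : α, (fun x => x * Real.logb 2 x) (prob p X a) :=
        sum_push_eq _ he (fun x => x * Real.logb 2 x) (zero_mul _)

lemma ent_snd_le (hp0 : ∀ ω, 0 ≤ p ω) {α β : Type*} [Fintype α] [Fintype β]
    (X : Ω → α) (Y : Ω → β) :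
    ent p Y ≤ ent p (fun ω => (X ω, Y ω)) := by
  unfold ent
  rw [neg_le_neg_iff, Fintype.sum_prod_type_right]
  calc ∑ b : β, ∑ a : α, prob p (fun ω => (X ω, Y ω)) (a, b) *
          Real.logb 2 (prob p (fun ω => (X ω, Y ω)) (a, b))
      ≤ ∑ b : β, ∑ a : α, prob p (fun ω => (X ω, Y ω)) (a, b) * Real.logb 2 (prob p Y b) := by
        refine Finset.sum_le_sum fun b _ => Finset.sum_le_sum fun a _ => ?_
        rcases (prob_nonneg hp0 (fun ω => (X ω, Y ω)) (a, b)).lt_or_eq with hpos | h0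
        · refine mul_le_mul_of_nonneg_left ?_ hpos.le
          refine Real.logb_le_logb_of_le one_lt_two hpos ?_
          rw [prob_snd X Y b]
          exact Finset.single_le_sum (f := fun a' => prob p (fun ω => (X ω, Y ω)) (a', b)) (fun a' _ => prob_nonneg hp0 _ _) (Finset.mem_univ a)
        · rw [← h0]; simp
    _ = ∑ b : β, prob p Y b * Real.logb 2 (prob p Y b) := by
        refine Finset.sum_congr rfl fun b _ => ?_
        rw [← Finset.sum_mul, ← prob_snd]

lemma ent_comp_le (hp0 : ∀ ω, 0 ≤ p ω) {α β : Type*} [Fintype α] [Fintype β]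
    (X : Ω → α) (g : α → β) :
    ent p (fun ω => g (X ω)) ≤ ent p X := by
  have h1 : ent p (fun ω => ((g (X ω)), X ω)) = ent p X :=
    ent_comp_inj X (e := fun x => (g x, x)) fun a b h => congrArg Prod.snd h
  calc ent p (fun ω => g (X ω)) ≤ ent p (fun ω => (X ω, g (X ω))) :=
        ent_snd_le hp0 X (fun ω => g (X ω))
    _ = ent p X := ent_comp_inj X (e := fun x => (x, g x)) fun a b h => congrArg Prod.fst h

lemma ent_unif {α : Type*} [Fintype α] [Nonempty α] {X : Ω → α}
    (h : ∀ a : α, prob p X a = 1 / (Fintype.card α : ℝ)) :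
    ent p X = Real.logb 2 (Fintype.card α) := by
  have hc : (0:ℝ) < (Fintype.card α : ℝ) := by
    exact_mod_cast Fintype.card_pos
  unfold ent
  simp only [h, Finset.sum_const, Finset.card_univ, nsmul_eq_mul, one_div]
  rw [Real.logb_inv]
  field_simp


lemma logSumAux {ι : Type*} (s : Finset ι) (a b : ι → ℝ) (ha : ∀ i ∈ s, 0 ≤ a i)
    (hb : ∀ i ∈ s, 0 ≤ b i) (hab : ∀ i ∈ s, b i = 0 → a i = 0) :
    (∑ i ∈ s, a i) * Real.log ((∑ i ∈ s, a i) / (∑ i ∈ s, b i)) ≤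
      ∑ i ∈ s, a i * Real.log (a i / b i) := by
  set A := ∑ i ∈ s, a i with hA
  set B := ∑ i ∈ s, b i with hB
  have hA0 : 0 ≤ A := Finset.sum_nonneg ha
  rcases hA0.lt_or_eq with hApos | hAzero
  · have hBpos : 0 < B := by
      rcases (Finset.sum_nonneg hb).lt_or_eq with h | h
      · exact h
      · exfalso
        have hb0 : ∀ i ∈ s, b i = 0 := by
          intro i hi
          exact le_antisymm (h ▸ Finset.single_le_sum hb hi) (hb i hi)
        have : A = 0 := Finset.sum_eq_zero fun i hi => hab i hi (hb0 i hi)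
        exact hApos.ne' this
    have key : ∀ i ∈ s, a i * Real.log (A / B) ≤ a i * Real.log (a i / b i) + (A / B * b i - a i) := by
      intro i hi
      rcases (ha i hi).lt_or_eq with hai | hai
      · have hbi : 0 < b i := by
          rcases (hb i hi).lt_or_eq with h | h
          · exact h
          · exact absurd (hab i hi h.symm) hai.ne'
        have ht : 0 < A / B * (b i / a i) := by positivity
        have hlog := Real.log_le_sub_one_of_pos ht
        have hsplit : Real.log (A / B * (b i / a i)) = Real.log (A / B) - Real.log (a i / b i) := by
          rw [Real.log_mul (by positivity) (by positivity), Real.log_div hApos.ne' hBpos.ne',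
            Real.log_div hbi.ne' hai.ne', Real.log_div hai.ne' hbi.ne']
          ring
        rw [hsplit] at hlog
        have := mul_le_mul_of_nonneg_left hlog hai.le
        have hcancel : a i * (A / B * (b i / a i) - 1) = A / B * b i - a i := by
          field_simp
        nlinarith [this, hcancel]
      · rw [← hai]
        have : 0 ≤ A / B * b i := mul_nonneg (by positivity) (hb i hi)
        simpa using this
    calc A * Real.log (A / B) = ∑ i ∈ s, a i * Real.log (A / B) := by rw [← Finset.sum_mul]
      _ ≤ ∑ i ∈ s, (a i * Real.log (a i / b i) + (A / B * b i - a i)) := Finset.sum_le_sum key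
      _ = (∑ i ∈ s, a i * Real.log (a i / b i)) + (A / B * B - A) := by
          rw [Finset.sum_add_distrib, Finset.sum_sub_distrib, ← Finset.mul_sum]
      _ = ∑ i ∈ s, a i * Real.log (a i / b i) := by
          rw [div_mul_cancel₀ _ hBpos.ne']; ring
  · have ha0 : ∀ i ∈ s, a i = 0 := by
      intro i hi
      exact le_antisymm (hAzero ▸ Finset.single_le_sum ha hi) (ha i hi)
    rw [← hAzero, zero_mul]
    refine le_of_eq (Finset.sum_eq_zero fun i hi => ?_).symm
    rw [ha0 i hi, zero_mul]

lemma logSum {ι : Type*} (s : Finset ι) (a b : ι → ℝ) (ha : ∀ i ∈ s, 0 ≤ a i)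
    (hb : ∀ i ∈ s, 0 ≤ b i) (hab : ∀ i ∈ s, b i = 0 → a i = 0) :
    (∑ i ∈ s, a i) * Real.logb 2 ((∑ i ∈ s, a i) / (∑ i ∈ s, b i)) ≤
      ∑ i ∈ s, a i * Real.logb 2 (a i / b i) := by
  have h2 : (0:ℝ) < Real.log 2 := Real.log_pos one_lt_two
  simp only [Real.logb, ← mul_div_assoc]
  rw [← Finset.sum_div, div_le_div_iff_of_pos_right h2]
  exact logSumAux s a b ha hb hab


lemma mutInfo_eq_kl (hp0 : ∀ ω, 0 ≤ p ω) {α β : Type*} [Fintype α] [Fintype β]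
    (X : Ω → α) (Y : Ω → β) :
    mutInfo p X Y = ∑ a : α, ∑ b : β,
      prob p (fun ω => (X ω, Y ω)) (a, b) *
        Real.logb 2 (prob p (fun ω => (X ω, Y ω)) (a, b) / (prob p X a * prob p Y b)) := by
  have key : ∀ (a : α) (b : β),
      prob p (fun ω => (X ω, Y ω)) (a, b) *
        Real.logb 2 (prob p (fun ω => (X ω, Y ω)) (a, b) / (prob p X a * prob p Y b))
      = prob p (fun ω => (X ω, Y ω)) (a, b) * Real.logb 2 (prob p (fun ω => (X ω, Y ω)) (a, b))
        - prob p (fun ω => (X ω, Y ω)) (a, b) * Real.logb 2 (prob p X a)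
        - prob p (fun ω => (X ω, Y ω)) (a, b) * Real.logb 2 (prob p Y b) := by
    intro a b
    rcases (prob_nonneg hp0 (fun ω => (X ω, Y ω)) (a, b)).lt_or_eq with hpos | h0
    · have hX : 0 < prob p X a := by
        refine lt_of_lt_of_le hpos ?_
        rw [prob_fst X Y a]
        exact Finset.single_le_sum (f := fun b' => prob p (fun ω => (X ω, Y ω)) (a, b'))
          (fun b' _ => prob_nonneg hp0 _ _) (Finset.mem_univ b)
      have hY : 0 < prob p Y b := by
        refine lt_of_lt_of_le hpos ?_
        rw [prob_snd X Y b]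
        exact Finset.single_le_sum (f := fun a' => prob p (fun ω => (X ω, Y ω)) (a', b))
          (fun a' _ => prob_nonneg hp0 _ _) (Finset.mem_univ a)
      rw [Real.logb_div hpos.ne' (by positivity), Real.logb_mul hX.ne' hY.ne']
      ring
    · rw [← h0]
      simp
  have e1 : ∑ a : α, ∑ b : β, prob p (fun ω => (X ω, Y ω)) (a, b) * Real.logb 2 (prob p X a)
      = ∑ a : α, prob p X a * Real.logb 2 (prob p X a) := by
    refine Finset.sum_congr rfl fun a _ => ?_
    rw [← Finset.sum_mul, ← prob_fst X Y a]
  have e2 : ∑ a : α, ∑ b : β, prob p (fun ω => (X ω, Y ω)) (a, b) * Real.logb 2 (prob p Y b)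
      = ∑ b : β, prob p Y b * Real.logb 2 (prob p Y b) := by
    rw [Finset.sum_comm]
    refine Finset.sum_congr rfl fun b _ => ?_
    rw [← Finset.sum_mul, ← prob_snd X Y b]
  simp only [key, Finset.sum_sub_distrib]
  rw [e1, e2]
  unfold mutInfo ent
  rw [Fintype.sum_prod_type]
  ring

lemma mutInfo_comp_comp_le (hp0 : ∀ ω, 0 ≤ p ω) {α β α' β' : Type*}
    [Fintype α] [Fintype β] [Fintype α'] [Fintype β']
    (X : Ω → α) (Y : Ω → β) (f : α → α') (g : β → β') :
    mutInfo p (fun ω => f (X ω)) (fun ω => g (Y ω)) ≤ mutInfo p X Y := by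
  classical
  rw [mutInfo_eq_kl hp0, mutInfo_eq_kl hp0]
  set J : α × β → ℝ := fun x => prob p (fun ω => (X ω, Y ω)) x with hJdef
  set m : α × β → α' × β' := fun x => (f x.1, g x.2) with hmdef
  have hF1 : ∀ y : α' × β', prob p (fun ω => (f (X ω), g (Y ω))) y
      = ∑ x ∈ Finset.univ.filter (fun x => m x = y), J x := by
    intro y
    rw [Finset.sum_filter]
    convert prob_comp m (fun ω => (X ω, Y ω)) y using 1
    exact Finset.sum_congr rfl fun x _ => by congr
  have hF2 : ∀ y : α' × β', prob p (fun ω => f (X ω)) y.1 * prob p (fun ω => g (Y ω)) y.2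
      = ∑ x ∈ Finset.univ.filter (fun x => m x = y), prob p X x.1 * prob p Y x.2 := by
    intro y
    rw [prob_comp f X y.1, prob_comp g Y y.2, Finset.sum_mul_sum, Finset.sum_filter,
      Fintype.sum_prod_type]
    refine Finset.sum_congr rfl fun a _ => Finset.sum_congr rfl fun b _ => ?_
    by_cases h1 : f a = y.1 <;> by_cases h2 : g b = y.2 <;>
      simp [hmdef, h1, h2, Prod.ext_iff]
  have hmarg1 : ∀ x : α × β, J x ≤ prob p X x.1 := by
    intro x
    rw [prob_fst X Y x.1]
    exact Finset.single_le_sum (f := fun b' => prob p (fun ω => (X ω, Y ω)) (x.1, b'))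
      (fun b' _ => prob_nonneg hp0 _ _) (Finset.mem_univ x.2)
  calc ∑ a' : α', ∑ b' : β', prob p (fun ω => (f (X ω), g (Y ω))) (a', b') *
        Real.logb 2 (prob p (fun ω => (f (X ω), g (Y ω))) (a', b') /
          (prob p (fun ω => f (X ω)) a' * prob p (fun ω => g (Y ω)) b'))
      = ∑ y : α' × β', prob p (fun ω => (f (X ω), g (Y ω))) y *
          Real.logb 2 (prob p (fun ω => (f (X ω), g (Y ω))) y /
            (prob p (fun ω => f (X ω)) y.1 * prob p (fun ω => g (Y ω)) y.2)) := by
        rw [Fintype.sum_prod_type]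
    _ ≤ ∑ y : α' × β', ∑ x ∈ Finset.univ.filter (fun x => m x = y),
          J x * Real.logb 2 (J x / (prob p X x.1 * prob p Y x.2)) := by
        refine Finset.sum_le_sum fun y _ => ?_
        rw [hF1 y, hF2 y]
        refine logSum _ _ _ (fun x _ => prob_nonneg hp0 _ _)
          (fun x _ => mul_nonneg (prob_nonneg hp0 _ _) (prob_nonneg hp0 _ _))
          (fun x _ hx0 => ?_)
        rcases mul_eq_zero.1 hx0 with h | h
        · exact le_antisymm (h ▸ hmarg1 x) (prob_nonneg hp0 _ _)
        · refine le_antisymm ?_ (prob_nonneg hp0 _ _)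
          have : J x ≤ prob p Y x.2 := by
            rw [prob_snd X Y x.2]
            exact Finset.single_le_sum (f := fun a' => prob p (fun ω => (X ω, Y ω)) (a', x.2))
              (fun a' _ => prob_nonneg hp0 _ _) (Finset.mem_univ x.1)
          exact h ▸ this
    _ = ∑ x : α × β, J x * Real.logb 2 (J x / (prob p X x.1 * prob p Y x.2)) :=
        Finset.sum_fiberwise _ _ _
    _ = ∑ a : α, ∑ b : β, prob p (fun ω => (X ω, Y ω)) (a, b) *
        Real.logb 2 (prob p (fun ω => (X ω, Y ω)) (a, b) / (prob p X a * prob p Y b)) := by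
        rw [Fintype.sum_prod_type]


/-- Entropy of a finite pmf given as a function. -/
noncomputable def entD {α : Type*} [Fintype α] (d : α → ℝ) : ℝ :=
  - ∑ a : α, d a * Real.logb 2 (d a)

/-- Chain rule for a pair whose conditional distribution is given by a kernel. -/
lemma ent_pair_kernel {α γ : Type*} [Fintype α] [Fintype γ] (X : Ω → α) (Z : Ω → γ)
    (κ : γ → α → ℝ) (hκ1 : ∀ z, ∑ a : α, κ z a = 1)
    (hker : ∀ (a : α) (z : γ), prob p (fun ω => (X ω, Z ω)) (a, z) = prob p Z z * κ z a) :
    ent p (fun ω => (X ω, Z ω)) = ent p Z + ∑ z : γ, prob p Z z * entD (κ z) := by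
  have key : ∀ (a : α) (z : γ),
      prob p Z z * κ z a * Real.logb 2 (prob p Z z * κ z a)
      = κ z a * (prob p Z z * Real.logb 2 (prob p Z z)) + prob p Z z * (κ z a * Real.logb 2 (κ z a)) := by
    intro a z
    by_cases h1 : prob p Z z = 0
    · simp [h1]
    · by_cases h2 : κ z a = 0
      · simp [h2]
      · rw [Real.logb_mul h1 h2]
        ring
  unfold ent entD
  rw [Fintype.sum_prod_type_right]
  have : ∀ z : γ, ∑ a : α, prob p (fun ω => (X ω, Z ω)) (a, z) *
      Real.logb 2 (prob p (fun ω => (X ω, Z ω)) (a, z))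
      = prob p Z z * Real.logb 2 (prob p Z z)
        + prob p Z z * ∑ a : α, κ z a * Real.logb 2 (κ z a) := by
    intro z
    simp only [hker, key]
    rw [Finset.sum_add_distrib, ← Finset.sum_mul, hκ1 z, one_mul, ← Finset.mul_sum]
  simp only [this]
  rw [Finset.sum_add_distrib, neg_add]
  congr 1
  rw [← Finset.sum_neg_distrib]
  exact Finset.sum_congr rfl fun z _ => (mul_neg _ _).symm


/-- If `(U, V, F)` has a product distribution, then any function of `(U, V)` is
independent of `F`. -/
lemma indep_fun_of_prod (hp1 : ∑ ω : Ω, p ω = 1) {B C D α : Type*}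
    [Fintype B] [Fintype C] [Fintype D]
    (U : Ω → B) (V : Ω → C) (F : Ω → D) (dU : B → ℝ) (dV : C → ℝ)
    (hind : ∀ u v f, prob p (fun ω => (U ω, V ω, F ω)) (u, v, f)
      = dU u * dV v * prob p F f)
    (T : B → C → α) (a : α) (f : D) :
    prob p (fun ω => (T (U ω) (V ω), F ω)) (a, f)
      = prob p F f * prob p (fun ω => T (U ω) (V ω)) a := by
  have hL : prob p (fun ω => (T (U ω) (V ω), F ω)) (a, f)
      = ∑ u : B, ∑ v : C, (if T u v = a then dU u * dV v else 0) * prob p F f := by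
    have := prob_comp (p := p) (fun x : B × C × D => (T x.1 x.2.1, x.2.2))
      (fun ω => (U ω, V ω, F ω)) (a, f)
    rw [this, Fintype.sum_prod_type]
    refine Finset.sum_congr rfl fun u _ => ?_
    rw [Fintype.sum_prod_type]
    refine Finset.sum_congr rfl fun v _ => ?_
    rw [Finset.sum_eq_single f]
    · rw [hind u v f]
      by_cases h : T u v = a <;> simp [h, Prod.ext_iff]
    · intro f' _ hf'
      rw [if_neg]
      intro hEq; exact hf' (congrArg Prod.snd hEq)
    · simp
  have hR : prob p (fun ω => T (U ω) (V ω)) a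
      = ∑ u : B, ∑ v : C, (if T u v = a then dU u * dV v else 0) := by
    have := prob_comp (p := p) (fun x : B × C × D => T x.1 x.2.1)
      (fun ω => (U ω, V ω, F ω)) a
    rw [this, Fintype.sum_prod_type]
    refine Finset.sum_congr rfl fun u _ => ?_
    rw [Fintype.sum_prod_type]
    refine Finset.sum_congr rfl fun v _ => ?_
    by_cases h : T u v = a
    · simp only [h, if_true, hind]
      rw [← Finset.mul_sum, prob_sum hp1 F, mul_one]
    · simp [h]
  rw [hL, hR, Finset.mul_sum]
  refine Finset.sum_congr rfl fun u _ => ?_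
  rw [← Finset.sum_mul]
  exact mul_comm _ _

/-- Pushing the second component of a pair forward along a map. -/
lemma prob_map_snd {α γ δ : Type*} [Fintype γ] (X : Ω → α) (F : Ω → γ) (h : γ → δ)
    (x : α) (q : δ) :
    prob p (fun ω => (X ω, h (F ω))) (x, q)
      = ∑ f : γ, if h f = q then prob p (fun ω => (X ω, F ω)) (x, f) else 0 := by
  have kk : ∀ f' : γ, (if h f' = q then prob p (fun ω => (X ω, F ω)) (x, f') else 0)
      = ∑ ω : Ω, if (X ω, F ω) = (x, f') ∧ h f' = q then p ω else 0 := by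
    intro f'
    by_cases hf : h f' = q
    · simp only [hf, if_true, and_true]
      unfold prob
      exact Finset.sum_congr rfl fun ω _ => by congr
    · simp [hf]
  simp only [kk]
  unfold prob
  rw [Finset.sum_comm]
  refine Finset.sum_congr rfl fun ω _ => ?_
  rw [Finset.sum_eq_single (F ω)]
  · by_cases h1 : X ω = x <;> by_cases h2 : h (F ω) = q <;> simp [h1, h2, Prod.ext_iff]
  · intro f' _ hf'
    rw [if_neg]
    rintro ⟨h1, -⟩
    exact hf' (congrArg Prod.snd h1).symm
  · simp

lemma sum_prob_comp_mul {γ δ : Type*} [Fintype γ] [Fintype δ] (F : Ω → γ) (h : γ → δ)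
    (c : δ → ℝ) :
    ∑ q : δ, prob p (fun ω => h (F ω)) q * c q = ∑ f : γ, prob p F f * c (h f) := by
  have : ∀ q : δ, prob p (fun ω => h (F ω)) q * c q
      = ∑ f : γ, (if h f = q then prob p F f * c q else 0) := by
    intro q
    rw [prob_comp h F q, Finset.sum_mul]
    refine Finset.sum_congr rfl fun f _ => ?_
    by_cases hf : h f = q <;> simp [hf]
  simp only [this]
  rw [Finset.sum_comm]
  refine Finset.sum_congr rfl fun f _ => ?_
  rw [Finset.sum_eq_single (h f)]
  · simp
  · intro q _ hq; rw [if_neg fun hh => hq hh.symm]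
  · simp

lemma identDist_comp {α β : Type*} [Fintype α] {T T' : Ω → α}
    (h : ∀ a, prob p T a = prob p T' a) (φ : α → β) (b : β) :
    prob p (fun ω => φ (T ω)) b = prob p (fun ω => φ (T' ω)) b := by
  rw [prob_comp φ T b, prob_comp φ T' b]
  exact Finset.sum_congr rfl fun a _ => by rw [h a]

lemma mutInfo_congr {α β : Type*} [Fintype α] [Fintype β] {X X' : Ω → α} {Y Y' : Ω → β}
    (h : ∀ z, prob p (fun ω => (X ω, Y ω)) z = prob p (fun ω => (X' ω, Y' ω)) z) :
    mutInfo p X Y = mutInfo p X' Y' := by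
  have hX : ∀ a, prob p X a = prob p X' a := by
    intro a
    rw [prob_fst X Y a, prob_fst X' Y' a]
    exact Finset.sum_congr rfl fun b _ => h (a, b)
  have hY : ∀ b, prob p Y b = prob p Y' b := by
    intro b
    rw [prob_snd X Y b, prob_snd X' Y' b]
    exact Finset.sum_congr rfl fun a _ => h (a, b)
  unfold mutInfo
  rw [ent_congr h, ent_congr hX, ent_congr hY]


end SPIRaux

open SPIRaux

/-- In any zero-error SPIR scheme, for every message index `k` and every
database index `n`, `L ≤ H(A_1^[k], …, A_N^[k] | F) − H(A_n^[k] | F)`. -/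
theorem spir_joint_answer_entropy_bound
    (K N L : ℕ) (hK : 2 ≤ K) (hN : 2 ≤ N) (hL : 1 ≤ L)
    (Ω : Type*) [Fintype Ω]
    (p : Ω → ℝ) (hp0 : ∀ ω, 0 ≤ p ω) (hp1 : ∑ ω : Ω, p ω = 1)
    (𝓢 𝓕 : Type*) [Fintype 𝓢] [Fintype 𝓕]
    (𝓠 𝓐 : Fin N → Type*) [∀ n, Fintype (𝓠 n)] [∀ n, Fintype (𝓐 n)]
    (W : Fin K → Ω → (Fin L → ZMod 2)) (S : Ω → 𝓢) (F : Ω → 𝓕)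
    (Q : ∀ (_ : Fin K) (n : Fin N), Ω → 𝓠 n) (A : ∀ (_ : Fin K) (n : Fin N), Ω → 𝓐 n)
    -- each message is uniformly distributed on the set of `L`-bit strings
    (hWunif : ∀ k, Unif p (W k))
    -- the messages, the common randomness `S` and the user randomness `F`
    -- are mutually independent
    (hIndep : ∀ (w : ∀ _ : Fin K, Fin L → ZMod 2) (s : 𝓢) (f : 𝓕),
      prob p (fun ω => ((fun k => W k ω), S ω, F ω)) (w, s, f)
        = (∏ k, prob p (W k) (w k)) * prob p S s * prob p F f)
    -- each query is a deterministic function of `F`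
    (hQ : ∀ k n, ∃ g : 𝓕 → 𝓠 n, ∀ ω, Q k n ω = g (F ω))
    -- each answer is a deterministic function of the query, the messages and `S`
    (hA : ∀ k n, ∃ g : 𝓠 n → (∀ _ : Fin K, Fin L → ZMod 2) → 𝓢 → 𝓐 n,
      ∀ ω, A k n ω = g (Q k n ω) (fun j => W j ω) (S ω))
    -- correctness: `W_k` is decodable from the answers and `F`
    (hCorrect : ∀ k, ∃ g : (∀ n, 𝓐 n) → 𝓕 → (Fin L → ZMod 2),
      ∀ ω, W k ω = g (fun n => A k n ω) (F ω))
    -- user-privacy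
    (hUserPriv : ∀ (n : Fin N) (k k' : Fin K),
      IdentDist p (fun ω => (Q k n ω, A k n ω, (fun j => W j ω), S ω))
                  (fun ω => (Q k' n ω, A k' n ω, (fun j => W j ω), S ω)))
    -- database-privacy
    (hDBPriv : ∀ k : Fin K,
      mutInfo p (fun ω => (fun j : {j : Fin K // j ≠ k} => W j.1 ω))
        (fun ω => ((fun n => Q k n ω), (fun n => A k n ω), F ω)) = 0) :
    ∀ (k : Fin K) (n : Fin N),
      (L : ℝ) ≤ condEnt p (fun ω => (fun m => A k m ω)) F - condEnt p (A k n) F := by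
  intro k n
  obtain ⟨gQ, hgQ⟩ := hQ k n
  obtain ⟨gA, hgA⟩ := hA k n
  obtain ⟨dec, hdec⟩ := hCorrect k
  -- a message index different from `k`
  have hKpos : (0 : ℕ) < K := by omega
  have h1K : (1 : ℕ) < K := by omega
  obtain ⟨k', hk'⟩ : ∃ k' : Fin K, k ≠ k' := by
    by_cases h0 : k = ⟨0, hKpos⟩
    · exact ⟨⟨1, h1K⟩, by rw [h0]; intro h; exact absurd (congrArg Fin.val h) (by simp)⟩
    · exact ⟨⟨0, hKpos⟩, h0⟩
  -- the conditional kernels given the query value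
  set κ : 𝓠 n → ((Fin L → ZMod 2) × 𝓐 n) → ℝ := fun q x =>
    prob p (fun ω => (W k ω, gA q (fun j => W j ω) (S ω))) x with hκdef
  set κA : 𝓠 n → 𝓐 n → ℝ := fun q a =>
    prob p (fun ω => gA q (fun j => W j ω) (S ω)) a with hκAdef
  -- kernel property conditioning on F
  have hkerF : ∀ (x : (Fin L → ZMod 2) × 𝓐 n) (f : 𝓕),
      prob p (fun ω => ((W k ω, A k n ω), F ω)) (x, f) = prob p F f * κ (gQ f) x := by
    intro x f
    have e1 : prob p (fun ω => ((W k ω, A k n ω), F ω)) (x, f)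
        = prob p (fun ω => ((W k ω, gA (gQ f) (fun j => W j ω) (S ω)), F ω)) (x, f) := by
      unfold prob
      refine Finset.sum_congr rfl fun ω _ => ?_
      dsimp only
      by_cases hf : F ω = f
      · have hAg : A k n ω = gA (gQ f) (fun j => W j ω) (S ω) := by
          rw [hgA ω, hgQ ω, hf]
        simp only [hAg]
        split_ifs <;> rfl
      · rw [if_neg (fun hc => hf (congrArg Prod.snd hc)),
          if_neg (fun hc => hf (congrArg Prod.snd hc))]
    rw [e1]
    exact indep_fun_of_prod hp1 (fun ω => fun j => W j ω) S F
      (fun u => ∏ j, prob p (W j) (u j)) (prob p S) hIndep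
      (fun u s => (u k, gA (gQ f) u s)) x f
  have hkerFA : ∀ (a : 𝓐 n) (f : 𝓕),
      prob p (fun ω => (A k n ω, F ω)) (a, f) = prob p F f * κA (gQ f) a := by
    intro a f
    have e1 : prob p (fun ω => (A k n ω, F ω)) (a, f)
        = prob p (fun ω => (gA (gQ f) (fun j => W j ω) (S ω), F ω)) (a, f) := by
      unfold prob
      refine Finset.sum_congr rfl fun ω _ => ?_
      dsimp only
      by_cases hf : F ω = f
      · have hAg : A k n ω = gA (gQ f) (fun j => W j ω) (S ω) := by
          rw [hgA ω, hgQ ω, hf]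
        simp only [hAg]
        split_ifs <;> rfl
      · rw [if_neg (fun hc => hf (congrArg Prod.snd hc)),
          if_neg (fun hc => hf (congrArg Prod.snd hc))]
    rw [e1]
    exact indep_fun_of_prod hp1 (fun ω => fun j => W j ω) S F
      (fun u => ∏ j, prob p (W j) (u j)) (prob p S) hIndep
      (fun u s => gA (gQ f) u s) a f
  -- marginal distribution of the query
  have hprobQ : ∀ q : 𝓠 n, prob p (fun ω => gQ (F ω)) q
      = ∑ f : 𝓕, if gQ f = q then prob p F f else 0 := fun q => prob_comp gQ F q
  -- kernel property conditioning on Q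
  have hkerQ : ∀ (x : (Fin L → ZMod 2) × 𝓐 n) (q : 𝓠 n),
      prob p (fun ω => ((W k ω, A k n ω), gQ (F ω))) (x, q)
        = prob p (fun ω => gQ (F ω)) q * κ q x := by
    intro x q
    rw [prob_map_snd (fun ω => (W k ω, A k n ω)) F gQ x q, hprobQ q, Finset.sum_mul]
    refine Finset.sum_congr rfl fun f _ => ?_
    by_cases hf : gQ f = q
    · rw [if_pos hf, if_pos hf, hkerF x f, hf]
    · simp [hf]
  have hkerQA : ∀ (a : 𝓐 n) (q : 𝓠 n),
      prob p (fun ω => (A k n ω, gQ (F ω))) (a, q)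
        = prob p (fun ω => gQ (F ω)) q * κA q a := by
    intro a q
    rw [prob_map_snd (A k n) F gQ a q, hprobQ q, Finset.sum_mul]
    refine Finset.sum_congr rfl fun f _ => ?_
    by_cases hf : gQ f = q
    · rw [if_pos hf, if_pos hf, hkerFA a f, hf]
    · simp [hf]
  -- chain rules
  have E1 : ent p (fun ω => ((W k ω, A k n ω), F ω))
      = ent p F + ∑ f : 𝓕, prob p F f * entD (κ (gQ f)) :=
    ent_pair_kernel (fun ω => (W k ω, A k n ω)) F (fun f => κ (gQ f))
      (fun f => prob_sum hp1 _) hkerF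
  have E2 : ent p (fun ω => (A k n ω, F ω))
      = ent p F + ∑ f : 𝓕, prob p F f * entD (κA (gQ f)) :=
    ent_pair_kernel (A k n) F (fun f => κA (gQ f)) (fun f => prob_sum hp1 _) hkerFA
  have E3 : ent p (fun ω => ((W k ω, A k n ω), gQ (F ω)))
      = ent p (fun ω => gQ (F ω)) + ∑ q : 𝓠 n, prob p (fun ω => gQ (F ω)) q * entD (κ q) :=
    ent_pair_kernel (fun ω => (W k ω, A k n ω)) (fun ω => gQ (F ω)) κ
      (fun q => prob_sum hp1 _) hkerQ
  have E4 : ent p (fun ω => (A k n ω, gQ (F ω)))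
      = ent p (fun ω => gQ (F ω)) + ∑ q : 𝓠 n, prob p (fun ω => gQ (F ω)) q * entD (κA q) :=
    ent_pair_kernel (A k n) (fun ω => gQ (F ω)) κA (fun q => prob_sum hp1 _) hkerQA
  have E5 : ∑ q : 𝓠 n, prob p (fun ω => gQ (F ω)) q * entD (κ q)
      = ∑ f : 𝓕, prob p F f * entD (κ (gQ f)) := sum_prob_comp_mul F gQ fun q => entD (κ q)
  have E6 : ∑ q : 𝓠 n, prob p (fun ω => gQ (F ω)) q * entD (κA q)
      = ∑ f : 𝓕, prob p F f * entD (κA (gQ f)) := sum_prob_comp_mul F gQ fun q => entD (κA q)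
  -- correctness: the joint answers determine `(W k, A k n)`
  have hstepB : ent p (fun ω => ((W k ω, A k n ω), F ω))
      ≤ ent p (fun ω => ((fun m => A k m ω), F ω)) := by
    have heq : (fun ω => ((W k ω, A k n ω), F ω))
        = fun ω => ((dec (fun m => A k m ω) (F ω), (fun m => A k m ω) n), F ω) := by
      funext ω
      rw [hdec ω]
    rw [heq]
    exact ent_comp_le hp0 (fun ω => ((fun m => A k m ω), F ω))
      (fun t => ((dec t.1 t.2, t.1 n), t.2))
  -- regrouping
  have hregroup : ent p (fun ω => ((W k ω, A k n ω), gQ (F ω)))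
      = ent p (fun ω => (W k ω, (A k n ω, gQ (F ω)))) := by
    exact (ent_comp_inj (fun ω => (W k ω, (A k n ω, gQ (F ω))))
      (e := fun x => ((x.1, x.2.1), x.2.2))
      (fun x y hxy => by
        obtain ⟨x1, x2, x3⟩ := x
        obtain ⟨y1, y2, y3⟩ := y
        simpa [Prod.ext_iff, and_assoc] using hxy))
  -- privacy: the pair (answer, query) is independent of the desired message
  have hident : ∀ z, prob p (fun ω => (W k ω, (A k n ω, Q k n ω))) z
      = prob p (fun ω => (W k ω, (A k' n ω, Q k' n ω))) z := fun z =>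
    identDist_comp (hUserPriv n k k') (fun t => (t.2.2.1 k, (t.2.1, t.1))) z
  have hdpi : mutInfo p (W k) (fun ω => (A k' n ω, Q k' n ω)) ≤ 0 := by
    have h1 := mutInfo_comp_comp_le hp0
      (fun ω => (fun j : {j : Fin K // j ≠ k'} => W j.1 ω))
      (fun ω => ((fun m => Q k' m ω), (fun m => A k' m ω), F ω))
      (fun v => v ⟨k, hk'⟩)
      (fun t => (t.2.1 n, t.1 n))
    rw [hDBPriv k'] at h1
    exact h1
  have hI : mutInfo p (W k) (fun ω => (A k n ω, Q k n ω)) ≤ 0 := by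
    rw [mutInfo_congr hident]
    exact hdpi
  have hIQ : mutInfo p (W k) (fun ω => (A k n ω, gQ (F ω))) ≤ 0 := by
    have heq : (fun ω => (A k n ω, Q k n ω)) = fun ω => (A k n ω, gQ (F ω)) := by
      funext ω
      rw [hgQ ω]
    rw [← heq]
    exact hI
  -- entropy of the uniform message
  have hWk : ent p (W k) = (L : ℝ) := by
    rw [ent_unif (hWunif k)]
    have hcard : (Fintype.card (Fin L → ZMod 2) : ℝ) = (2 : ℝ) ^ L := by
      rw [Fintype.card_fun]
      push_cast
      simp
    rw [hcard, Real.logb_pow, Real.logb_self_eq_one one_lt_two, mul_one]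
  -- put everything together
  have hImut : (L : ℝ) ≤ ent p (fun ω => (W k ω, (A k n ω, gQ (F ω))))
      - ent p (fun ω => (A k n ω, gQ (F ω))) := by
    have := hIQ
    unfold mutInfo at this
    rw [hWk] at this
    linarith
  unfold condEnt
  have hE4' : ent p (fun ω => (A k n ω, gQ (F ω)))
      = ent p (fun ω => gQ (F ω)) + ∑ f : 𝓕, prob p F f * entD (κA (gQ f)) := by
    rw [E4, E6]
  have hE3' : ent p (fun ω => (W k ω, (A k n ω, gQ (F ω))))
      = ent p (fun ω => gQ (F ω)) + ∑ f : 𝓕, prob p F f * entD (κ (gQ f)) := by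
    rw [← hregroup, E3, E5]
  linarith
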